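/- Under the hypotheses of the symmetrized Schlesinger system with B_0 = 0, the traces satisfy the inversion formula tr(B_m B_n) = 4 L_m Ĥ_n - 2( L_{m-1} Ĥ_{n+1} + L_{m+1} Ĥ_{n-1} ) for all m, n ≥ 1. -/

import Mathlib

open Matrix

section Aux

open Finset

lemma sum_Icc_reflect (n : ℤ) (f : ℤ → ℂ) :
    ∑ k ∈ Finset.Icc 1 (n-1), f k = ∑ k ∈ Finset.Icc 1 (n-1), f (n - k) := by
  refine Finset.sum_nbij' (fun k => n - k) (fun k => n - k) ?_ ?_ ?_ ?_ ?_ <;>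
    intros a ha <;> simp only [Finset.mem_Icc] at * <;> try omega
  ring_nf

lemma antisym_sum_zero (n : ℤ) (h : ℤ → ℤ → ℂ) (hh : ∀ k j, h k j = - h j k) :
    ∑ k ∈ Finset.Icc 1 (n-1), ∑ j ∈ Finset.Icc 1 (n-k-1), h k j = 0 := by
  have hcomm : (∑ k ∈ Finset.Icc 1 (n-1), ∑ j ∈ Finset.Icc 1 (n-k-1), h k j)
      = ∑ j ∈ Finset.Icc 1 (n-1), ∑ k ∈ Finset.Icc 1 (n-j-1), h k j := by
    refine Finset.sum_comm' ?_
    intro x y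
    simp only [Finset.mem_Icc]
    omega
  have hneg : (∑ j ∈ Finset.Icc 1 (n-1), ∑ k ∈ Finset.Icc 1 (n-j-1), h k j)
      = - ∑ k ∈ Finset.Icc 1 (n-1), ∑ j ∈ Finset.Icc 1 (n-k-1), h k j := by
    rw [← Finset.sum_neg_distrib]
    refine Finset.sum_congr rfl fun j _ => ?_
    rw [← Finset.sum_neg_distrib]
    exact Finset.sum_congr rfl fun k _ => hh k j
  have h2 := hcomm.trans hneg
  linear_combination h2 / 2

lemma scalar_sum (p q : ℤ) (u : ℤ → ℤ → ℤ → ℂ) (t : ℤ → ℤ → ℂ)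
    (hu : ∀ a b c, u a b c = u c a b) (ht : ∀ a b, t a b = t b a) :
    ∑ k ∈ Finset.Icc 1 (q-1),
      ((∑ j ∈ Finset.Icc 1 (k-1), (u j (p+k-j) (q-k) - u (p+k-j) j (q-k)))
        + (k:ℂ) * t (p+k) (q-k)
        + ((∑ j ∈ Finset.Icc 1 (q-k-1), (u k j (p+(q-k)-j) - u k (p+(q-k)-j) j))
        + ((q-k : ℤ):ℂ) * t k (p+(q-k))))
      = 2 * ∑ k ∈ Finset.Icc 1 (q-1), (k:ℂ) * t (p+k) (q-k) := by
  rw [Finset.sum_add_distrib, Finset.sum_add_distrib, Finset.sum_add_distrib]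
  have hS1 : ∑ k ∈ Finset.Icc 1 (q-1),
      ∑ j ∈ Finset.Icc 1 (k-1), (u j (p+k-j) (q-k) - u (p+k-j) j (q-k)) = 0 := by
    rw [sum_Icc_reflect q]
    have : ∀ k, (∑ j ∈ Finset.Icc 1 (q-k-1), (u j (p+(q-k)-j) (q-(q-k)) - u (p+(q-k)-j) j (q-(q-k))))
        = ∑ j ∈ Finset.Icc 1 (q-k-1), (u j (p+q-k-j) k - u (p+q-k-j) j k) := by
      intro k
      refine Finset.sum_congr rfl fun j _ => ?_
      rw [show q - (q-k) = k by ring, show p+(q-k)-j = p+q-k-j by ring]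
    calc ∑ k ∈ Finset.Icc 1 (q-1),
          ∑ j ∈ Finset.Icc 1 (q - k - 1), (u j (p+(q-k)-j) (q-(q-k)) - u (p+(q-k)-j) j (q-(q-k)))
        = ∑ k ∈ Finset.Icc 1 (q-1), ∑ j ∈ Finset.Icc 1 (q-k-1),
            (u j (p+q-k-j) k - u (p+q-k-j) j k) := Finset.sum_congr rfl fun k _ => this k
      _ = 0 := by
          refine antisym_sum_zero q (fun k j => u j (p+q-k-j) k - u (p+q-k-j) j k) ?_
          intro k j
          have e : p + q - j - k = p + q - k - j := by ring
          rw [e]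
          linear_combination (-(hu (p+q-k-j) k j)) - hu (p+q-k-j) j k
  have hS2 : ∑ k ∈ Finset.Icc 1 (q-1),
      ∑ j ∈ Finset.Icc 1 (q-k-1), (u k j (p+(q-k)-j) - u k (p+(q-k)-j) j) = 0 := by
    refine antisym_sum_zero q (fun k j => u k j (p+(q-k)-j) - u k (p+(q-k)-j) j) ?_
    intro k j
    have e : p + (q-j) - k = p + (q-k) - j := by ring
    rw [e]
    linear_combination (-(hu k (p+(q-k)-j) j)) - hu j (p+(q-k)-j) k
  have hS3 : ∑ k ∈ Finset.Icc 1 (q-1), ((q-k : ℤ):ℂ) * t k (p+(q-k))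
      = ∑ k ∈ Finset.Icc 1 (q-1), (k:ℂ) * t (p+k) (q-k) := by
    rw [sum_Icc_reflect q (fun k => ((q-k : ℤ):ℂ) * t k (p+(q-k)))]
    refine Finset.sum_congr rfl fun k _ => ?_
    rw [show q - (q-k) = k by ring, ht (q-k) (p+k)]
  rw [hS1, hS2, hS3]
  ring

lemma scalar_sum' (p q : ℤ) (u : ℤ → ℤ → ℤ → ℂ) (t : ℤ → ℤ → ℂ)
    (hu : ∀ a b c, u a b c = u c a b) (ht : ∀ a b, t a b = t b a) :
    ∑ k ∈ Finset.Icc 1 (q-1),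
      ((∑ j ∈ Finset.Icc 1 (k-1),
          (-(1/4 : ℂ) * u j (p+k-j) (q-k) - -(1/4 : ℂ) * u (p+k-j) j (q-k)))
        + -(1/4 : ℂ) * ((k:ℂ) * t (p+k) (q-k))
        + ((∑ j ∈ Finset.Icc 1 (q-k-1),
          (-(1/4 : ℂ) * u k j (p+(q-k)-j) - -(1/4 : ℂ) * u k (p+(q-k)-j) j))
        + -(1/4 : ℂ) * (((q-k : ℤ):ℂ) * t k (p+(q-k)))))
      = ∑ k ∈ Finset.Icc 1 (q-1), -(1/2 : ℂ) * ((k:ℂ) * t (p+k) (q-k)) := by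
  have h := scalar_sum p q u t hu ht
  have h1 : ∑ k ∈ Finset.Icc 1 (q-1),
      ((∑ j ∈ Finset.Icc 1 (k-1),
          (-(1/4 : ℂ) * u j (p+k-j) (q-k) - -(1/4 : ℂ) * u (p+k-j) j (q-k)))
        + -(1/4 : ℂ) * ((k:ℂ) * t (p+k) (q-k))
        + ((∑ j ∈ Finset.Icc 1 (q-k-1),
          (-(1/4 : ℂ) * u k j (p+(q-k)-j) - -(1/4 : ℂ) * u k (p+(q-k)-j) j))
        + -(1/4 : ℂ) * (((q-k : ℤ):ℂ) * t k (p+(q-k)))))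
      = -(1/4 : ℂ) * ∑ k ∈ Finset.Icc 1 (q-1),
        ((∑ j ∈ Finset.Icc 1 (k-1), (u j (p+k-j) (q-k) - u (p+k-j) j (q-k)))
          + (k:ℂ) * t (p+k) (q-k)
          + ((∑ j ∈ Finset.Icc 1 (q-k-1), (u k j (p+(q-k)-j) - u k (p+(q-k)-j) j))
          + ((q-k : ℤ):ℂ) * t k (p+(q-k)))) := by
    rw [Finset.mul_sum]
    refine Finset.sum_congr rfl fun k _ => ?_
    simp only [mul_add, Finset.mul_sum, mul_sub]
  rw [h1, h]
  rw [show (∑ k ∈ Finset.Icc 1 (q-1), -(1/2 : ℂ) * ((k:ℂ) * t (p+k) (q-k)))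
      = -(1/2 : ℂ) * ∑ k ∈ Finset.Icc 1 (q-1), (k:ℂ) * t (p+k) (q-k) from
    (Finset.mul_sum _ _ _).symm]
  ring

end Aux

/-- Under the symmetrized Schlesinger system with `B_0 = 0`, the traces satisfy the inversion
formula `tr(B_m B_n) = 4 L_m Ĥ_n - 2 (L_{m-1} Ĥ_{n+1} + L_{m+1} Ĥ_{n-1})` for all `m, n ≥ 1`. -/
theorem trace_inversion_formula {X : Type*} (M : ℕ)
    (B : ℤ → X → Matrix (Fin M) (Fin M) ℂ) (hB0 : B 0 = 0)
    (Lm : ℤ → (X → Matrix (Fin M) (Fin M) ℂ) →ₗ[ℂ] (X → Matrix (Fin M) (Fin M) ℂ))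
    (Ls : ℤ → (X → ℂ) →ₗ[ℂ] (X → ℂ))
    (hLeib : ∀ m : ℤ, -1 ≤ m → ∀ F G : X → Matrix (Fin M) (Fin M) ℂ,
      Lm m (F * G) = Lm m F * G + F * Lm m G)
    (hTr : ∀ m : ℤ, -1 ≤ m → ∀ F : X → Matrix (Fin M) (Fin M) ℂ,
      Ls m (fun x => (F x).trace) = fun x => ((Lm m F) x).trace)
    (hSch : ∀ m n : ℤ, -1 ≤ m → 1 ≤ n →
      Lm m (B n) = (∑ k ∈ Finset.Icc 1 (n - 1),
          (B k * B (m + n - k) - B (m + n - k) * B k)) + (n : ℂ) • B (m + n))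
    (H : ℤ → X → ℂ)
    (hH : ∀ n, H n = fun x => -(1/4 : ℂ) * ∑ k ∈ Finset.Icc 0 n, (B k x * B (n - k) x).trace) :
    ∀ m n : ℤ, 1 ≤ m → 1 ≤ n →
      (fun x => (B m x * B n x).trace) =
        (4 : ℂ) • Ls m (H n) - (2 : ℂ) • (Ls (m - 1) (H (n + 1)) + Ls (m + 1) (H (n - 1))) := by
  have key : ∀ p q : ℤ, -1 ≤ p → 0 ≤ q →
      Ls p (H q) = fun x =>
        -(1/2 : ℂ) * ∑ k ∈ Finset.Icc 1 (q-1), (k : ℂ) * (B (p+k) x * B (q-k) x).trace := by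
    intro p q hp hq
    have hsum : ∀ x : X, ∑ k ∈ Finset.Icc 0 q, (B k x * B (q - k) x).trace
        = ((∑ k ∈ Finset.Icc 1 (q-1), B k * B (q - k)) x).trace := by
      intro x
      have h1 : ((∑ k ∈ Finset.Icc 1 (q-1), B k * B (q - k)) x).trace
          = ∑ k ∈ Finset.Icc 1 (q-1), (B k x * B (q - k) x).trace := by
        simp only [Finset.sum_apply, Pi.mul_apply, Matrix.trace_sum]
      rw [h1]
      symm
      refine Finset.sum_subset (fun k hk => ?_) (fun k hk hk' => ?_)
      · simp only [Finset.mem_Icc] at *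
        omega
      · simp only [Finset.mem_Icc] at hk hk'
        have hkq : k = 0 ∨ k = q := by omega
        rcases hkq with h | h
        · rw [h, hB0]; simp
        · rw [h, show q - q = 0 by ring, hB0]; simp
    have hG : H q = (-(1/4 : ℂ)) •
        (fun x => ((∑ k ∈ Finset.Icc 1 (q-1), B k * B (q - k)) x).trace) := by
      funext x
      rw [hH]
      simp only [Pi.smul_apply, smul_eq_mul]
      rw [hsum x]
    have hLmG : Lm p (∑ k ∈ Finset.Icc 1 (q-1), B k * B (q - k)) =
        ∑ k ∈ Finset.Icc 1 (q-1),
          (((∑ j ∈ Finset.Icc 1 (k-1), (B j * B (p + k - j) - B (p + k - j) * B j))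
              + (k : ℂ) • B (p + k)) * B (q - k)
            + B k * ((∑ j ∈ Finset.Icc 1 (q - k - 1),
                (B j * B (p + (q - k) - j) - B (p + (q - k) - j) * B j))
              + ((q - k : ℤ) : ℂ) • B (p + (q - k)))) := by
      rw [map_sum]
      refine Finset.sum_congr rfl fun k hk => ?_
      rw [Finset.mem_Icc] at hk
      rw [hLeib p hp, hSch p k hp (by omega), hSch p (q - k) hp (by omega)]
    rw [hG, (Ls p).map_smul, hTr p hp, hLmG]
    funext x
    simp only [Pi.smul_apply, smul_eq_mul, Finset.sum_apply, Pi.add_apply, Pi.mul_apply,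
      Pi.sub_apply, Matrix.trace_sum, Matrix.trace_add, Matrix.trace_sub, Matrix.trace_smul,
      add_mul, mul_add, Finset.sum_mul, Finset.mul_sum, sub_mul, mul_sub, smul_mul_assoc,
      mul_smul_comm, Matrix.trace_smul]
    simp only [mul_assoc]
    have hu : ∀ a b c : ℤ, (B a x * (B b x * B c x)).trace = (B c x * (B a x * B b x)).trace := by
      intro a b c
      rw [← mul_assoc]
      exact Matrix.trace_mul_comm _ _
    have ht : ∀ a b : ℤ, (B a x * B b x).trace = (B b x * B a x).trace := fun a b =>
      Matrix.trace_mul_comm _ _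
    exact scalar_sum' p q (fun a b c => (B a x * (B b x * B c x)).trace)
      (fun a b => (B a x * B b x).trace) hu ht
  intro m n hm hn
  rw [key m n (by omega) (by omega), key (m-1) (n+1) (by omega) (by omega),
    key (m+1) (n-1) (by omega) (by omega)]
  funext x
  simp only [Pi.smul_apply, Pi.add_apply, Pi.sub_apply, smul_eq_mul]
  have hA2 : ∑ k ∈ Finset.Icc 1 (n+1-1), (k:ℂ) * (B (m-1+k) x * B (n+1-k) x).trace
      = (B m x * B n x).trace
        + ∑ k ∈ Finset.Icc 1 (n-1), ((k:ℂ)+1) * (B (m+k) x * B (n-k) x).trace := by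
    have e1 : ∑ k ∈ Finset.Icc 1 (n+1-1), (k:ℂ) * (B (m-1+k) x * B (n+1-k) x).trace
        = ∑ k ∈ Finset.Icc 0 (n-1), (((k:ℤ):ℂ) + 1) * (B (m+k) x * B (n-k) x).trace := by
      refine Finset.sum_nbij' (fun k => k - 1) (fun k => k + 1) ?_ ?_ ?_ ?_ ?_ <;>
        intro a ha <;> simp only [Finset.mem_Icc] at * <;> try omega
      rw [show m + (a-1) = m - 1 + a by ring, show n - (a-1) = n + 1 - a by ring]
      push_cast
      ring
    rw [e1, show Finset.Icc (0:ℤ) (n-1) = insert 0 (Finset.Icc 1 (n-1)) by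
      ext a; simp only [Finset.mem_Icc, Finset.mem_insert]; omega,
      Finset.sum_insert (by simp)]
    rw [show m + 0 = m by ring, show n - 0 = n by ring]
    norm_num
  have hA3 : ∑ k ∈ Finset.Icc 1 (n-1-1), (k:ℂ) * (B (m+1+k) x * B (n-1-k) x).trace
      = ∑ k ∈ Finset.Icc 1 (n-1), ((k:ℂ)-1) * (B (m+k) x * B (n-k) x).trace := by
    have e1 : ∑ k ∈ Finset.Icc 1 (n-1-1), (k:ℂ) * (B (m+1+k) x * B (n-1-k) x).trace
        = ∑ k ∈ Finset.Icc 2 (n-1), (((k:ℤ):ℂ) - 1) * (B (m+k) x * B (n-k) x).trace := by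
      refine Finset.sum_nbij' (fun k => k + 1) (fun k => k - 1) ?_ ?_ ?_ ?_ ?_ <;>
        intro a ha <;> simp only [Finset.mem_Icc] at * <;> try omega
      rw [show m + (a+1) = m + 1 + a by ring, show n - (a+1) = n - 1 - a by ring]
      push_cast
      ring
    rw [e1]
    refine Finset.sum_subset (fun k hk => ?_) (fun k hk hk' => ?_)
    · simp only [Finset.mem_Icc] at *; omega
    · simp only [Finset.mem_Icc] at hk hk'
      rw [show k = 1 by omega]
      norm_num
  rw [hA2, hA3]
  have hBC : (∑ k ∈ Finset.Icc 1 (n-1), ((k:ℂ)+1) * (B (m+k) x * B (n-k) x).trace)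
      + ∑ k ∈ Finset.Icc 1 (n-1), ((k:ℂ)-1) * (B (m+k) x * B (n-k) x).trace
      = 2 * ∑ k ∈ Finset.Icc 1 (n-1), (k:ℂ) * (B (m+k) x * B (n-k) x).trace := by
    rw [← Finset.sum_add_distrib, Finset.mul_sum]
    refine Finset.sum_congr rfl fun k _ => ?_
    ring
  linear_combination -hBC
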